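/- The Laplace kernel is characteristic on ℝ: for Borel probability measures P and Q on ℝ, the quantity MMD²(P,Q) = ∬ e^{−|u−u'|} dP(u)dP(u') + ∬ e^{−|v−v'|} dQ(v)dQ(v') − 2 ∬ e^{−|u−v|} dP(u)dQ(v) equals zero if and only if P = Q. -/

import Mathlib

open MeasureTheory

section LaplaceMMDAux
open Real Set ENNReal Filter

noncomputable def lapΦ (t x : ℝ) : ℝ≥0∞ :=
  if t ≤ x then ENNReal.ofReal (Real.exp (t - x)) else 0

lemma measurable_lapΦ : Measurable fun p : ℝ × ℝ => lapΦ p.1 p.2 := by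
  unfold lapΦ
  exact Measurable.ite (measurableSet_le measurable_fst measurable_snd)
    ((measurable_fst.sub measurable_snd).exp.ennreal_ofReal) measurable_const

lemma lapΦ_le_one (t x : ℝ) : lapΦ t x ≤ 1 := by
  unfold lapΦ
  split_ifs with h
  · rw [← ENNReal.ofReal_one]
    exact ENNReal.ofReal_le_ofReal (by rw [← Real.exp_zero]; exact Real.exp_le_exp.2 (by linarith))
  · exact zero_le_one

lemma integral_exp_two_mul (m : ℝ) :
    ∫ t in Iic m, Real.exp (2 * t) = Real.exp (2 * m) / 2 ∧
      IntegrableOn (fun t => Real.exp (2 * t)) (Iic m) := by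
  have key : ∀ t : ℝ, (Iic m).indicator (fun t => Real.exp (2 * t)) t
      = (Iic (2 * m)).indicator Real.exp (2 * t) := by
    intro t
    by_cases h : t ≤ m
    · rw [indicator_of_mem (by simpa using h), indicator_of_mem (by simp [mem_Iic]; linarith)]
    · rw [indicator_of_notMem (by simpa using h),
        indicator_of_notMem (by simp only [mem_Iic, not_le] at h ⊢; linarith)]
  have hint : Integrable ((Iic (2*m)).indicator Real.exp) := by
    rw [integrable_indicator_iff measurableSet_Iic]
    exact integrableOn_exp_Iic _
  constructor
  · rw [← integral_indicator measurableSet_Iic]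
    calc ∫ t, (Iic m).indicator (fun t => Real.exp (2 * t)) t
        = ∫ t, (Iic (2*m)).indicator Real.exp (2 * t) := by simp_rw [key]
      _ = |(2:ℝ)⁻¹| • ∫ s, (Iic (2*m)).indicator Real.exp s :=
          Measure.integral_comp_mul_left _ 2
      _ = Real.exp (2*m) / 2 := by
          rw [integral_indicator measurableSet_Iic, integral_exp_Iic]
          rw [abs_of_nonneg (by norm_num : (0:ℝ) ≤ 2⁻¹), smul_eq_mul]
          ring
  · have h2 : Integrable (fun t => (Iic (2*m)).indicator Real.exp (2 * t)) :=
      hint.comp_mul_left' two_ne_zero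
    have : Integrable ((Iic m).indicator (fun t => Real.exp (2 * t))) :=
      h2.congr (by filter_upwards with t using (key t).symm)
    exact (integrable_indicator_iff measurableSet_Iic).1 this

lemma lapΦ_eq_indicator_t (x : ℝ) :
    (fun t => lapΦ t x) = (Iic x).indicator (fun t => ENNReal.ofReal (Real.exp (t - x))) := by
  funext t
  unfold lapΦ
  by_cases h : t ≤ x
  · rw [if_pos h, indicator_of_mem (by simpa using h)]
  · rw [if_neg h, indicator_of_notMem (by simpa using h)]

lemma lintegral_lapΦ (x : ℝ) : ∫⁻ t, lapΦ t x = 1 := by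
  rw [lapΦ_eq_indicator_t, lintegral_indicator measurableSet_Iic]
  have hInt : IntegrableOn (fun t => Real.exp (t - x)) (Iic x) := by
    refine ((integrableOn_exp_Iic x).div_const (Real.exp x)).congr ?_
    filter_upwards with t
    rw [Real.exp_sub]
  rw [← ofReal_integral_eq_lintegral_ofReal hInt
      (Filter.Eventually.of_forall fun t => (Real.exp_pos _).le)]
  have : ∫ t in Iic x, Real.exp (t - x) = 1 := by
    simp_rw [Real.exp_sub]
    rw [integral_div, integral_exp_Iic, div_self (Real.exp_ne_zero x)]
  rw [this, ENNReal.ofReal_one]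

lemma lintegral_lapΦ_mul (u v : ℝ) :
    ∫⁻ t, lapΦ t u * lapΦ t v = ENNReal.ofReal (Real.exp (-|u - v|) / 2) := by
  have key : (fun t => lapΦ t u * lapΦ t v)
      = (Iic (min u v)).indicator
        (fun t => ENNReal.ofReal (Real.exp (t - u) * Real.exp (t - v))) := by
    funext t
    unfold lapΦ
    by_cases h : t ≤ min u v
    · rw [if_pos (le_trans h (min_le_left _ _)), if_pos (le_trans h (min_le_right _ _)),
        indicator_of_mem (by simpa using h), ENNReal.ofReal_mul (Real.exp_pos _).le]
    · rw [indicator_of_notMem (by simpa using h)]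
      rcases min_lt_iff.1 (not_le.1 h) with h' | h'
      · rw [if_neg (not_le.2 h'), zero_mul]
      · rw [if_neg (not_le.2 h'), mul_zero]
  rw [key, lintegral_indicator measurableSet_Iic]
  have h2 : ∀ t : ℝ, Real.exp (t - u) * Real.exp (t - v)
      = Real.exp (2 * t) * Real.exp (-(u + v)) := by
    intro t
    rw [← Real.exp_add, ← Real.exp_add]
    ring_nf
  have hInt : IntegrableOn (fun t => Real.exp (t - u) * Real.exp (t - v)) (Iic (min u v)) := by
    refine ((integral_exp_two_mul (min u v)).2.mul_const (Real.exp (-(u + v)))).congr ?_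
    filter_upwards with t
    rw [h2]
  rw [← ofReal_integral_eq_lintegral_ofReal hInt
      (Filter.Eventually.of_forall fun t => (mul_pos (Real.exp_pos _) (Real.exp_pos _)).le)]
  congr 1
  simp_rw [h2]
  rw [integral_mul_const, (integral_exp_two_mul (min u v)).1, div_mul_eq_mul_div,
    ← Real.exp_add]
  congr 2
  rcases le_total u v with h | h
  · rw [min_eq_left h, abs_of_nonpos (by linarith)]; ring
  · rw [min_eq_right h, abs_of_nonneg (by linarith)]; ring

lemma lapΦ_ne_top (t x : ℝ) : lapΦ t x ≠ ⊤ :=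
  ((lapΦ_le_one t x).trans_lt ENNReal.one_lt_top).ne

lemma measurable_Lm (μ : Measure ℝ) [SFinite μ] :
    Measurable fun t => ∫⁻ x, lapΦ t x ∂μ :=
  Measurable.lintegral_prod_right measurable_lapΦ

lemma Lm_le_one (μ : Measure ℝ) [IsProbabilityMeasure μ] (t : ℝ) :
    ∫⁻ x, lapΦ t x ∂μ ≤ 1 := by
  calc ∫⁻ x, lapΦ t x ∂μ ≤ ∫⁻ _, 1 ∂μ := lintegral_mono fun x => lapΦ_le_one t x
    _ = 1 := by simp

lemma Lm_ne_top (μ : Measure ℝ) [IsProbabilityMeasure μ] (t : ℝ) :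
    ∫⁻ x, lapΦ t x ∂μ ≠ ⊤ :=
  ((Lm_le_one μ t).trans_lt ENNReal.one_lt_top).ne

lemma lintegral_Lm (μ : Measure ℝ) [IsProbabilityMeasure μ] :
    ∫⁻ t, ∫⁻ x, lapΦ t x ∂μ = 1 := by
  rw [lintegral_lintegral_swap measurable_lapΦ.aemeasurable]
  simp_rw [lintegral_lapΦ]
  simp

lemma lintegral2_eq (μ ν : Measure ℝ) [IsProbabilityMeasure μ] [IsProbabilityMeasure ν] :
    ∫⁻ u, ∫⁻ v, ENNReal.ofReal (Real.exp (-|u - v|)) ∂ν ∂μ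
      = 2 * ∫⁻ t, (∫⁻ x, lapΦ t x ∂μ) * (∫⁻ x, lapΦ t x ∂ν) := by
  have hofReal : ∀ e : ℝ, ENNReal.ofReal e = 2 * ENNReal.ofReal (e / 2) := by
    intro e
    rw [show (2 : ℝ≥0∞) = ENNReal.ofReal 2 by simp, ← ENNReal.ofReal_mul (by norm_num)]
    by_cases he : 0 ≤ e
    · congr 1; ring
    · rw [ENNReal.ofReal_of_nonpos (by linarith), ENNReal.ofReal_of_nonpos (by push_neg at he; linarith)]
  calc ∫⁻ u, ∫⁻ v, ENNReal.ofReal (Real.exp (-|u - v|)) ∂ν ∂μ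
      = ∫⁻ u, ∫⁻ v, 2 * ∫⁻ t, lapΦ t u * lapΦ t v ∂volume ∂ν ∂μ := by
        refine lintegral_congr fun u => lintegral_congr fun v => ?_
        rw [lintegral_lapΦ_mul, ← hofReal]
    _ = ∫⁻ u, 2 * ∫⁻ v, ∫⁻ t, lapΦ t u * lapΦ t v ∂volume ∂ν ∂μ := by
        refine lintegral_congr fun u => ?_
        rw [lintegral_const_mul' _ _ ENNReal.ofNat_ne_top]
    _ = ∫⁻ u, 2 * ∫⁻ t, ∫⁻ v, lapΦ t u * lapΦ t v ∂ν ∂volume ∂μ := by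
        refine lintegral_congr fun u => ?_
        congr 1
        refine lintegral_lintegral_swap ?_
        exact ((measurable_lapΦ.comp (measurable_snd.prodMk measurable_const)).mul
          (measurable_lapΦ.comp (measurable_snd.prodMk measurable_fst))).aemeasurable
    _ = ∫⁻ u, 2 * ∫⁻ t, lapΦ t u * ∫⁻ x, lapΦ t x ∂ν ∂volume ∂μ := by
        refine lintegral_congr fun u => ?_
        congr 1
        refine lintegral_congr fun t => ?_
        rw [lintegral_const_mul' _ _ (lapΦ_ne_top t u)]
    _ = 2 * ∫⁻ u, ∫⁻ t, lapΦ t u * ∫⁻ x, lapΦ t x ∂ν ∂volume ∂μ := by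
        rw [lintegral_const_mul' _ _ ENNReal.ofNat_ne_top]
    _ = 2 * ∫⁻ t, ∫⁻ u, lapΦ t u * ∫⁻ x, lapΦ t x ∂ν ∂μ ∂volume := by
        congr 1
        refine lintegral_lintegral_swap ?_
        exact ((measurable_lapΦ.comp (measurable_snd.prodMk measurable_fst)).mul
          ((measurable_Lm ν).comp measurable_snd)).aemeasurable
    _ = 2 * ∫⁻ t, (∫⁻ x, lapΦ t x ∂μ) * ∫⁻ x, lapΦ t x ∂ν := by
        congr 1
        refine lintegral_congr fun t => ?_
        rw [lintegral_mul_const' _ _ (Lm_ne_top ν t)]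

lemma measurable_kofReal : Measurable fun p : ℝ × ℝ => ENNReal.ofReal (Real.exp (-|p.1 - p.2|)) :=
  ((measurable_fst.sub measurable_snd).abs.neg.exp).ennreal_ofReal

lemma double_integral_eq (μ ν : Measure ℝ) [IsProbabilityMeasure μ] [IsProbabilityMeasure ν] :
    ∫ u, ∫ v, Real.exp (-|u - v|) ∂ν ∂μ
      = (∫⁻ u, ∫⁻ v, ENNReal.ofReal (Real.exp (-|u - v|)) ∂ν ∂μ).toReal := by
  set I : ℝ → ℝ≥0∞ := fun u => ∫⁻ v, ENNReal.ofReal (Real.exp (-|u - v|)) ∂ν with hIdef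
  have hI : Measurable I := Measurable.lintegral_prod_right measurable_kofReal
  have h1 : ∀ u, I u ≤ 1 := by
    intro u
    calc I u ≤ ∫⁻ _, 1 ∂ν := by
          refine lintegral_mono fun v => ?_
          rw [← ENNReal.ofReal_one]
          exact ENNReal.ofReal_le_ofReal
            (by rw [← Real.exp_zero]; exact Real.exp_le_exp.2 (neg_nonpos.2 (abs_nonneg _)))
      _ = 1 := by simp
  have hinner : ∀ u, ∫ v, Real.exp (-|u - v|) ∂ν = (I u).toReal := by
    intro u
    exact integral_eq_lintegral_of_nonneg_ae
      (Filter.Eventually.of_forall fun v => (Real.exp_pos _).le)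
      ((continuous_const.sub continuous_id).abs.neg.rexp).aestronglyMeasurable
  simp_rw [hinner]
  rw [integral_eq_lintegral_of_nonneg_ae
      (Filter.Eventually.of_forall fun u => ENNReal.toReal_nonneg)
      hI.ennreal_toReal.aestronglyMeasurable]
  congr 1
  refine lintegral_congr fun u => ?_
  exact ENNReal.ofReal_toReal ((h1 u).trans_lt ENNReal.one_lt_top).ne

lemma lintegral_Lmul_le_one (μ ν : Measure ℝ) [IsProbabilityMeasure μ] [IsProbabilityMeasure ν] :
    ∫⁻ t, (∫⁻ x, lapΦ t x ∂μ) * (∫⁻ x, lapΦ t x ∂ν) ≤ 1 := by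
  calc ∫⁻ t, (∫⁻ x, lapΦ t x ∂μ) * (∫⁻ x, lapΦ t x ∂ν)
      ≤ ∫⁻ t, ∫⁻ x, lapΦ t x ∂μ := by
        refine lintegral_mono fun t => ?_
        calc (∫⁻ x, lapΦ t x ∂μ) * (∫⁻ x, lapΦ t x ∂ν)
            ≤ (∫⁻ x, lapΦ t x ∂μ) * 1 := mul_le_mul_right (Lm_le_one ν t) _
          _ = ∫⁻ x, lapΦ t x ∂μ := mul_one _
    _ = 1 := lintegral_Lm μ

lemma integral_toReal_mul (μ ν : Measure ℝ) [IsProbabilityMeasure μ] [IsProbabilityMeasure ν] :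
    ∫ t, (∫⁻ x, lapΦ t x ∂μ).toReal * (∫⁻ x, lapΦ t x ∂ν).toReal
      = (∫⁻ t, (∫⁻ x, lapΦ t x ∂μ) * (∫⁻ x, lapΦ t x ∂ν)).toReal := by
  rw [integral_eq_lintegral_of_nonneg_ae
      (Filter.Eventually.of_forall fun t =>
        mul_nonneg ENNReal.toReal_nonneg ENNReal.toReal_nonneg)
      ((measurable_Lm μ).ennreal_toReal.mul (measurable_Lm ν).ennreal_toReal).aestronglyMeasurable]
  congr 1
  refine lintegral_congr fun t => ?_
  rw [ENNReal.ofReal_mul ENNReal.toReal_nonneg, ENNReal.ofReal_toReal (Lm_ne_top μ t),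
    ENNReal.ofReal_toReal (Lm_ne_top ν t)]

lemma integrable_toReal_mul (μ ν : Measure ℝ) [IsProbabilityMeasure μ] [IsProbabilityMeasure ν] :
    Integrable (fun t => (∫⁻ x, lapΦ t x ∂μ).toReal * (∫⁻ x, lapΦ t x ∂ν).toReal) := by
  refine ⟨((measurable_Lm μ).ennreal_toReal.mul
    (measurable_Lm ν).ennreal_toReal).aestronglyMeasurable, ?_⟩
  rw [hasFiniteIntegral_iff_ofReal (Filter.Eventually.of_forall fun t =>
    mul_nonneg ENNReal.toReal_nonneg ENNReal.toReal_nonneg)]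
  have : ∀ t : ℝ, ENNReal.ofReal ((∫⁻ x, lapΦ t x ∂μ).toReal * (∫⁻ x, lapΦ t x ∂ν).toReal)
      = (∫⁻ x, lapΦ t x ∂μ) * (∫⁻ x, lapΦ t x ∂ν) := by
    intro t
    rw [ENNReal.ofReal_mul ENNReal.toReal_nonneg, ENNReal.ofReal_toReal (Lm_ne_top μ t),
      ENNReal.ofReal_toReal (Lm_ne_top ν t)]
  simp_rw [this]
  exact (lintegral_Lmul_le_one μ ν).trans_lt ENNReal.one_lt_top

lemma term_eq (μ ν : Measure ℝ) [IsProbabilityMeasure μ] [IsProbabilityMeasure ν] :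
    ∫ u, ∫ v, Real.exp (-|u - v|) ∂ν ∂μ
      = 2 * ∫ t, (∫⁻ x, lapΦ t x ∂μ).toReal * (∫⁻ x, lapΦ t x ∂ν).toReal := by
  rw [double_integral_eq, lintegral2_eq, ENNReal.toReal_mul, integral_toReal_mul]
  norm_num

lemma mmd_repr (P Q : Measure ℝ) [IsProbabilityMeasure P] [IsProbabilityMeasure Q] :
    (∫ u, ∫ u', Real.exp (-|u - u'|) ∂P ∂P)
        + (∫ v, ∫ v', Real.exp (-|v - v'|) ∂Q ∂Q)
        - 2 * (∫ u, ∫ v, Real.exp (-|u - v|) ∂Q ∂P)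
    = 2 * ∫ t, ((∫⁻ x, lapΦ t x ∂P).toReal - (∫⁻ x, lapΦ t x ∂Q).toReal)^2 := by
  set f : ℝ → ℝ := fun t => (∫⁻ x, lapΦ t x ∂P).toReal with hf
  set g : ℝ → ℝ := fun t => (∫⁻ x, lapΦ t x ∂Q).toReal with hg
  have hff := integrable_toReal_mul P P
  have hgg := integrable_toReal_mul Q Q
  have hfg := integrable_toReal_mul P Q
  have hsq' : ∫ t, (f t - g t)^2
      = ∫ t, (f t * f t - 2 * (f t * g t)) + g t * g t :=
    integral_congr_ae (Filter.Eventually.of_forall fun t => by ring)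
  have hA : ∫ t, (f t * f t - 2 * (f t * g t)) + g t * g t
      = (∫ t, f t * f t - 2 * (f t * g t)) + ∫ t, g t * g t :=
    integral_add (hff.sub (hfg.const_mul 2)) hgg
  have hB : ∫ t, f t * f t - 2 * (f t * g t)
      = (∫ t, f t * f t) - ∫ t, 2 * (f t * g t) :=
    integral_sub hff (hfg.const_mul 2)
  have hC : ∫ t, 2 * (f t * g t) = 2 * ∫ t, f t * g t := integral_const_mul 2 _
  rw [term_eq P P, term_eq Q Q, term_eq P Q, hsq', hA, hB, hC]
  ring

lemma Lm_eq_tail (μ : Measure ℝ) (t : ℝ) :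
    ∫⁻ x, lapΦ t x ∂μ
      = ENNReal.ofReal (Real.exp t)
        * (μ.withDensity fun x => ENNReal.ofReal (Real.exp (-x))) (Ici t) := by
  rw [withDensity_apply _ measurableSet_Ici, ← lintegral_const_mul' _ _ ENNReal.ofReal_ne_top,
    ← lintegral_indicator measurableSet_Ici]
  refine lintegral_congr fun x => ?_
  unfold lapΦ
  by_cases h : t ≤ x
  · rw [if_pos h, indicator_of_mem (by simpa using h),
      ← ENNReal.ofReal_mul (Real.exp_pos _).le, ← Real.exp_add, ← sub_eq_add_neg]
  · rw [if_neg h, indicator_of_notMem (by simpa using h)]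

lemma tail_le (μ : Measure ℝ) [IsProbabilityMeasure μ] (s : ℝ) :
    (μ.withDensity fun x => ENNReal.ofReal (Real.exp (-x))) (Ici s)
      ≤ ENNReal.ofReal (Real.exp (-s)) := by
  rw [withDensity_apply _ measurableSet_Ici]
  calc ∫⁻ x in Ici s, ENNReal.ofReal (Real.exp (-x)) ∂μ
      ≤ ∫⁻ _ in Ici s, ENNReal.ofReal (Real.exp (-s)) ∂μ :=
        setLIntegral_mono measurable_const fun x hx =>
          ENNReal.ofReal_le_ofReal (Real.exp_le_exp.2 (neg_le_neg hx))
    _ = ENNReal.ofReal (Real.exp (-s)) * μ (Ici s) := setLIntegral_const _ _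
    _ ≤ ENNReal.ofReal (Real.exp (-s)) * 1 := mul_le_mul_right prob_le_one _
    _ = _ := mul_one _

lemma measure_eq_of_ae_Lm_eq (P Q : Measure ℝ)
    [IsProbabilityMeasure P] [IsProbabilityMeasure Q]
    (h : ∀ᵐ t : ℝ, ∫⁻ x, lapΦ t x ∂P = ∫⁻ x, lapΦ t x ∂Q) : P = Q := by
  set P' := P.withDensity fun x => ENNReal.ofReal (Real.exp (-x)) with hP'def
  set Q' := Q.withDensity fun x => ENNReal.ofReal (Real.exp (-x)) with hQ'def
  have hae : ∀ᵐ s : ℝ, P' (Ici s) = Q' (Ici s) := by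
    filter_upwards [h] with s hs
    rw [Lm_eq_tail, Lm_eq_tail] at hs
    exact (ENNReal.mul_right_inj (ENNReal.ofReal_pos.2 (Real.exp_pos s)).ne'
      ENNReal.ofReal_ne_top).1 hs
  have key : ∀ t, P' (Ici t) = Q' (Ici t) := by
    intro t
    set N : Set ℝ := {s | ¬ P' (Ici s) = Q' (Ici s)} with hNdef
    have hN : volume N = 0 := hae
    set r : ℕ → ℝ := fun n => t - 1 / ((n : ℝ) + 1) with hrdef
    have hrlt : ∀ n, r n < t := fun n => sub_lt_self _ (by positivity)
    have hmono : Antitone fun n => Ici (r n) := by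
      intro m n hmn
      refine Ici_subset_Ici.2 ?_
      have : 1 / ((n : ℝ) + 1) ≤ 1 / ((m : ℝ) + 1) := by
        apply one_div_le_one_div_of_le (by positivity)
        exact_mod_cast add_le_add_left (Nat.cast_le.2 hmn) 1
      simp only [r]
      linarith
    have hiInter : ⋂ n, Ici (r n) = Ici t := by
      ext x
      simp only [mem_iInter, mem_Ici]
      constructor
      · intro hx
        by_contra hxt
        push_neg at hxt
        obtain ⟨n, hn⟩ := exists_nat_one_div_lt (sub_pos.2 hxt)
        have := hx n
        simp only [r] at this
        linarith
      · intro hx n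
        have : (0:ℝ) < 1 / ((n : ℝ) + 1) := by positivity
        simp only [r]
        linarith
    have htendsP : Filter.Tendsto (fun n => P' (Ici (r n))) Filter.atTop (nhds (P' (Ici t))) := by
      have := tendsto_measure_iInter_atTop (μ := P') (s := fun n => Ici (r n))
        (fun n => measurableSet_Ici.nullMeasurableSet) hmono
        ⟨0, ((tail_le P _).trans_lt ENNReal.ofReal_lt_top).ne⟩
      rwa [hiInter] at this
    have htendsQ : Filter.Tendsto (fun n => Q' (Ici (r n))) Filter.atTop (nhds (Q' (Ici t))) := by
      have := tendsto_measure_iInter_atTop (μ := Q') (s := fun n => Ici (r n))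
        (fun n => measurableSet_Ici.nullMeasurableSet) hmono
        ⟨0, ((tail_le Q _).trans_lt ENNReal.ofReal_lt_top).ne⟩
      rwa [hiInter] at this
    have hpick : ∀ n, ∃ s, s ∈ Ioo (r n) t ∧ P' (Ici s) = Q' (Ici s) := by
      intro n
      have hvol : volume (Ioo (r n) t) ≠ 0 := by
        rw [Real.volume_Ioo]
        exact (ENNReal.ofReal_pos.2 (by linarith [hrlt n])).ne'
      have hvol2 : volume (Ioo (r n) t \ N) ≠ 0 := by
        rwa [measure_diff_null hN]
      obtain ⟨s, hs⟩ := nonempty_of_measure_ne_zero hvol2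
      exact ⟨s, hs.1, not_not.1 hs.2⟩
    choose s hs₁ hs₂ using hpick
    have hub : ∀ n, P' (Ici (s n)) ≤ P' (Ici (r n)) := fun n =>
      measure_mono (Ici_subset_Ici.2 (hs₁ n).1.le)
    have hlb : ∀ n, P' (Ici t) ≤ P' (Ici (s n)) := fun n =>
      measure_mono (Ici_subset_Ici.2 (hs₁ n).2.le)
    have hubQ : ∀ n, Q' (Ici (s n)) ≤ Q' (Ici (r n)) := fun n =>
      measure_mono (Ici_subset_Ici.2 (hs₁ n).1.le)
    have hlbQ : ∀ n, Q' (Ici t) ≤ Q' (Ici (s n)) := fun n =>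
      measure_mono (Ici_subset_Ici.2 (hs₁ n).2.le)
    have hsq1 : Filter.Tendsto (fun n => P' (Ici (s n))) Filter.atTop (nhds (P' (Ici t))) :=
      tendsto_of_tendsto_of_tendsto_of_le_of_le tendsto_const_nhds htendsP hlb hub
    have hsq2 : Filter.Tendsto (fun n => Q' (Ici (s n))) Filter.atTop (nhds (Q' (Ici t))) :=
      tendsto_of_tendsto_of_tendsto_of_le_of_le tendsto_const_nhds htendsQ hlbQ hubQ
    have : (fun n => P' (Ici (s n))) = fun n => Q' (Ici (s n)) := funext fun n => hs₂ n
    rw [this] at hsq1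
    exact tendsto_nhds_unique hsq1 hsq2
  have hcover : ⋃ n : ℕ, Ici (-(n : ℝ)) = univ := by
    ext x
    simp only [mem_iUnion, mem_Ici, mem_univ, iff_true]
    obtain ⟨n, hn⟩ := exists_nat_ge (-x)
    exact ⟨n, by linarith⟩
  have hPQ' : P' = Q' :=
    Measure.ext_of_generateFrom_of_iUnion (range Ici) (fun n => Ici (-(n : ℝ)))
      (BorelSpace.measurable_eq.trans (borel_eq_generateFrom_Ici ℝ)) isPiSystem_Ici hcover
      (fun n => mem_range_self _)
      (fun n => ((tail_le P _).trans_lt ENNReal.ofReal_lt_top).ne)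
      (by rintro _ ⟨a, rfl⟩; exact key a)
  have hrec : ∀ μ : Measure ℝ,
      (μ.withDensity fun x => ENNReal.ofReal (Real.exp (-x))).withDensity
        (fun x => ENNReal.ofReal (Real.exp x)) = μ := by
    intro μ
    rw [← withDensity_mul μ (measurable_neg.exp.ennreal_ofReal) Real.measurable_exp.ennreal_ofReal]
    have : ((fun x : ℝ => ENNReal.ofReal (Real.exp (-x))) * fun x => ENNReal.ofReal (Real.exp x))
        = fun _ => 1 := by
      funext x
      simp only [Pi.mul_apply, ← ENNReal.ofReal_mul (Real.exp_pos _).le, ← Real.exp_add]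
      norm_num
    rw [this]
    exact withDensity_one
  calc P = (P'.withDensity fun x => ENNReal.ofReal (Real.exp x)) := (hrec P).symm
    _ = (Q'.withDensity fun x => ENNReal.ofReal (Real.exp x)) := by rw [hPQ']
    _ = Q := hrec Q

end LaplaceMMDAux

open Real Set ENNReal Filter

/-- The Laplace kernel `k(u,v) = exp (-|u - v|)` is characteristic on `ℝ`:
for Borel probability measures `P` and `Q` on `ℝ`, the squared maximum mean discrepancy
`MMD²(P,Q) = E[k(U,U')] + E[k(V,V')] - 2 E[k(U,V)]`
(with `U, U' ∼ P` and `V, V' ∼ Q` all independent) vanishes if and only if `P = Q`. -/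
theorem laplace_kernel_characteristic (P Q : Measure ℝ)
    [IsProbabilityMeasure P] [IsProbabilityMeasure Q] :
    (∫ u, ∫ u', Real.exp (-|u - u'|) ∂P ∂P)
        + (∫ v, ∫ v', Real.exp (-|v - v'|) ∂Q ∂Q)
        - 2 * (∫ u, ∫ v, Real.exp (-|u - v|) ∂Q ∂P) = 0
    ↔ P = Q := by
  constructor
  · intro h0
    rw [mmd_repr] at h0
    set f : ℝ → ℝ := fun t => (∫⁻ x, lapΦ t x ∂P).toReal with hfdef
    set g : ℝ → ℝ := fun t => (∫⁻ x, lapΦ t x ∂Q).toReal with hgdef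
    have hz : ∫ t, (f t - g t)^2 = 0 := by linarith
    have hint : Integrable (fun t => (f t - g t)^2) := by
      have heq : (fun t => (f t - g t)^2)
          = fun t => (f t * f t - 2 * (f t * g t)) + g t * g t := funext fun t => by ring
      rw [heq]
      exact ((integrable_toReal_mul P P).sub
        ((integrable_toReal_mul P Q).const_mul 2)).add (integrable_toReal_mul Q Q)
    have hae0 := (integral_eq_zero_iff_of_nonneg (fun t => sq_nonneg _) hint).1 hz
    have hae : ∀ᵐ t : ℝ, ∫⁻ x, lapΦ t x ∂P = ∫⁻ x, lapΦ t x ∂Q := by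
      filter_upwards [hae0] with t ht
      have h1 : (f t - g t) ^ 2 = 0 := ht
      have h2 : f t = g t := sub_eq_zero.1 (pow_eq_zero_iff two_ne_zero |>.1 h1)
      exact (ENNReal.toReal_eq_toReal_iff' (Lm_ne_top P t) (Lm_ne_top Q t)).1 h2
    exact measure_eq_of_ae_Lm_eq P Q hae
  · intro h
    subst h
    ring
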